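/- Let $C$ be an associative conformal algebra over $k[D]$, char $k = 0$. Define $\{x \oo{n} y\} = \sum_{s \geq 0} (-1)^{n+s} \frac{D^s}{s!} (x \oo{n+s} y)$ (a finite sum by locality). Then for all $u, v, w \in C$ and $n, m \geq 0$: $u \oo{n} \{v \oo{m} w\} = \{(u \oo{n} v) \oo{m} w\}$. -/

import Mathlib

open Finset

lemma curly_shift_sum {M : Type*} [AddCommMonoid M] (g : ℕ → M) (S j : ℕ)
    (h0 : ∀ s, s < j → g s = 0) (hS : ∀ s, S ≤ s → g s = 0) :
    ∑ s ∈ range S, g s = ∑ r ∈ range S, g (r + j) := by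
  have h1 : ∑ s ∈ range S, g s = ∑ s ∈ range (S + j), g s := by
    apply Finset.sum_subset (range_subset_range.2 (Nat.le_add_right _ _))
    intro x _ hx
    exact hS x (le_of_not_gt fun h => hx (mem_range.2 h))
  have h2 : ∑ s ∈ Finset.Ico j (S + j), g s = ∑ s ∈ range (S + j), g s := by
    apply Finset.sum_subset
    · intro x hx; exact mem_range.2 (mem_Ico.1 hx).2
    · intro x hx hx'
      rcases lt_or_ge x j with h | h
      · exact h0 x h
      · exact absurd (mem_Ico.2 ⟨h, mem_range.1 hx⟩) hx'
  rw [h1, ← h2, Finset.sum_Ico_eq_sum_range]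
  refine Finset.sum_congr (by rw [Nat.add_sub_cancel]) fun i _ => by rw [Nat.add_comm]

lemma curly_key_scalar {k : Type*} [Field k] [CharZero k] (n m r a : ℕ) (ha : a ≤ n) :
    ∑ j ∈ range (a+1),
      (((-1:k)^(m+(r+j)) * (((r+j).factorial:k))⁻¹) *
        ((n.descFactorial j : k) * (((r+j).choose j : k))) * (((n-j).choose (a-j)) : k))
    = if a = 0 then (-1:k)^(m+r) * ((r.factorial:k))⁻¹ else 0 := by
  have h1 : ∀ j ∈ range (a+1),
      (((-1:k)^(m+(r+j)) * (((r+j).factorial:k))⁻¹) *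
        ((n.descFactorial j : k) * (((r+j).choose j : k))) * (((n-j).choose (a-j)) : k))
      = ((-1:k)^(m+r) * ((r.factorial:k))⁻¹ * (n.choose a : k)) * ((-1:k)^j * (a.choose j : k)) := by
    intro j hj
    have hja : j ≤ a := Nat.lt_succ_iff.1 (mem_range.1 hj)
    have hfac : ((r+j).choose j : k) * (r.factorial:k) * (j.factorial:k) = ((r+j).factorial : k) := by
      exact_mod_cast congrArg (Nat.cast (R := k)) (Nat.add_choose_mul_factorial_mul_factorial r j)
    have hdesc : (n.descFactorial j : k) = (j.factorial : k) * (n.choose j : k) := by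
      exact_mod_cast congrArg (Nat.cast (R := k)) (Nat.descFactorial_eq_factorial_mul_choose n j)
    have hcc : (n.choose a : k) * (a.choose j : k) = (n.choose j : k) * ((n-j).choose (a-j) : k) := by
      exact_mod_cast congrArg (Nat.cast (R := k)) (Nat.choose_mul (n := n) hja)
    have hr0 : ((r.factorial:k)) ≠ 0 := Nat.cast_ne_zero.2 (Nat.factorial_ne_zero r)
    have hj0 : ((j.factorial:k)) ≠ 0 := Nat.cast_ne_zero.2 (Nat.factorial_ne_zero j)
    have hrj0 : (((r+j).factorial:k)) ≠ 0 := Nat.cast_ne_zero.2 (Nat.factorial_ne_zero (r+j))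
    have hpow : (-1:k)^(m+(r+j)) = (-1:k)^(m+r) * (-1:k)^j := by
      rw [show m+(r+j) = (m+r)+j by ring, pow_add]
    rw [hpow, hdesc]
    field_simp
    linear_combination ((n.choose j:k) * ((n-j).choose (a-j):k)) * hfac
      + (-(((r+j).factorial:k))) * hcc
  rw [Finset.sum_congr rfl h1, ← Finset.mul_sum]
  have halt : (∑ j ∈ range (a+1), ((-1:k)^j * (a.choose j : k))) = if a = 0 then 1 else 0 := by
    have h := Int.alternating_sum_range_choose (n := a)
    have h2 := congrArg (fun z : ℤ => (z : k)) h
    push_cast at h2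
    split_ifs at h2 ⊢ <;> simpa using h2
  rw [halt]
  split_ifs with h
  · subst h; simp
  · simp

lemma curly_iterC2 {k : Type*} [Field k] {C : Type*} [AddCommGroup C] [Module k C]
    (Dop : C →ₗ[k] C) (mul : ℕ → C →ₗ[k] C →ₗ[k] C)
    (hC2 : ∀ (n : ℕ) (x y : C),
      mul n x (Dop y) = Dop (mul n x y) + (n : k) • mul (n - 1) x y) :
    ∀ (s N : ℕ) (x y : C), mul N x ((Dop ^ s) y)
      = ∑ j ∈ range (s+1), ((N.descFactorial j : k) * (s.choose j : k)) •
          ((Dop ^ (s - j)) (mul (N - j) x y)) := by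
  intro s
  induction s with
  | zero => intro N x y; simp
  | succ s ih =>
    intro N x y
    have hstep : (Dop ^ (s+1)) y = Dop ((Dop ^ s) y) := by rw [pow_succ']; rfl
    rw [hstep, hC2 N x ((Dop ^ s) y), ih N x y, ih (N-1) x y, map_sum, Finset.smul_sum]
    have hf : ∀ j ∈ range (s+1),
        Dop (((N.descFactorial j : k) * (s.choose j : k)) • ((Dop ^ (s - j)) (mul (N - j) x y)))
        = ((N.descFactorial j : k) * (s.choose j : k)) • ((Dop ^ (s + 1 - j)) (mul (N - j) x y)) := by
      intro j hj
      have hj' : j ≤ s := Nat.lt_succ_iff.1 (mem_range.1 hj)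
      have e : s + 1 - j = (s - j) + 1 := by omega
      rw [map_smul, e, pow_succ', Module.End.mul_apply]
    have hg : ∀ j ∈ range (s+1),
        (N:k) • ((((N-1).descFactorial j : k) * (s.choose j : k)) • ((Dop ^ (s - j)) (mul (N - 1 - j) x y)))
        = ((N.descFactorial (j+1) : k) * (s.choose j : k)) • ((Dop ^ (s - j)) (mul (N - (j+1)) x y)) := by
      intro j hj
      have hidx : N - 1 - j = N - (j+1) := by omega
      have hsc : (N:k) * ((N-1).descFactorial j : k) = (N.descFactorial (j+1) : k) := by
        have hnat : N * ((N-1).descFactorial j) = N.descFactorial (j+1) := by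
          cases N with
          | zero => simp
          | succ t => simpa using (Nat.succ_descFactorial_succ t j).symm
        rw [← hnat]
        push_cast
        ring
      rw [smul_smul, hidx, ← mul_assoc, hsc]
    rw [Finset.sum_congr rfl hf, Finset.sum_congr rfl hg]
    have hsplit : ∑ j ∈ range (s+1+1), ((N.descFactorial j:k) * ((s+1).choose j : k)) • ((Dop ^ (s+1-j)) (mul (N-j) x y))
        = ∑ j ∈ range (s+1+1), (((N.descFactorial j:k) * (s.choose j : k)) • ((Dop ^ (s+1-j)) (mul (N-j) x y))
            + (if 1 ≤ j then ((N.descFactorial j:k) * ((s.choose (j-1) : k))) else 0) • ((Dop ^ (s+1-j)) (mul (N-j) x y))) := by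
      refine Finset.sum_congr rfl fun j hj => ?_
      rw [← add_smul]
      congr 1
      rcases j with _ | i
      · simp
      · rw [if_pos (Nat.succ_le_succ (Nat.zero_le i))]
        have hch : (s+1).choose (i+1) = s.choose i + s.choose (i+1) := Nat.choose_succ_succ' s i
        rw [hch]
        push_cast
        ring
    rw [hsplit, Finset.sum_add_distrib]
    congr 1
    · conv_rhs => rw [Finset.sum_range_succ]
      simp [Nat.choose_succ_self]
    · conv_rhs => rw [Finset.sum_range_succ']
      simp only [Nat.succ_sub_succ]
      simp

/-- The curly products `{x ⟨n⟩ y} = ∑ₛ (-1)^{n+s} (Dˢ/s!) (x ⟨n+s⟩ y)`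
(a finite sum whenever the products are local, expressed via `finsum`). -/
noncomputable def curlyFn {k : Type*} [Field k]
    {C : Type*} [AddCommGroup C] [Module k C]
    (Dop : C →ₗ[k] C) (mul : ℕ → C →ₗ[k] C →ₗ[k] C)
    (n : ℕ) (x y : C) : C :=
  ∑ᶠ s : ℕ, ((-1 : k) ^ (n + s) * ((s.factorial : k))⁻¹) • ((Dop ^ s) (mul (n + s) x y))

theorem curly_identity_one
    {k : Type*} [Field k] [CharZero k]
    {C : Type*} [AddCommGroup C] [Module k C]
    (Dop : C →ₗ[k] C) (mul : ℕ → C →ₗ[k] C →ₗ[k] C)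
    (hloc : ∀ x y : C, ∃ N : ℕ, ∀ n ≥ N, mul n x y = 0)
    (hC2 : ∀ (n : ℕ) (x y : C),
      mul n x (Dop y) = Dop (mul n x y) + (n : k) • mul (n - 1) x y)
    (hC3 : ∀ (n : ℕ) (x y : C),
      mul n (Dop x) y = -((n : k)) • mul (n - 1) x y)
    (hassocL : ∀ (n m : ℕ) (u v w : C),
      mul m (mul n u v) w =
        ∑ s ∈ range (n + 1),
          ((-1 : k) ^ s * (n.choose s : k)) • mul (n - s) u (mul (m + s) v w))
    (hassocR : ∀ (n m : ℕ) (u v w : C),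
      mul n u (mul m v w) =
        ∑ s ∈ range (n + 1), ((n.choose s : k)) • mul (m + s) (mul (n - s) u v) w) :
    ∀ (n m : ℕ) (u v w : C),
      mul n u (curlyFn Dop mul m v w) = curlyFn Dop mul m (mul n u v) w := by
  intro n m u v w
  classical
  obtain ⟨N0, hN0⟩ := hloc v w
  choose Nf hNf using fun b : ℕ => hloc (mul b u v) w
  set S : ℕ := max (max N0 ((range (n+1)).sup Nf)) (n+1) with hSdef
  have hS1 : ∀ p, S ≤ p → mul p v w = 0 := fun p hp =>
    hN0 p (le_trans (le_trans (le_max_left _ _) (le_max_left _ _)) hp)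
  have hS2 : ∀ b, b ≤ n → ∀ p, S ≤ p → mul p (mul b u v) w = 0 := by
    intro b hb p hp
    exact hNf b p (le_trans (le_trans (le_trans
      (Finset.le_sup (mem_range.2 (Nat.lt_succ_of_le hb))) (le_max_right N0 _))
      (le_max_left _ _)) hp)
  have hS3 : n + 1 ≤ S := le_max_right _ _
  have hcur1 : curlyFn Dop mul m v w
      = ∑ s ∈ range S, ((-1:k)^(m+s) * ((s.factorial:k))⁻¹) • ((Dop ^ s) (mul (m+s) v w)) := by
    refine finsum_eq_sum_of_support_subset _ ?_
    intro s hs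
    rw [Function.mem_support] at hs
    rw [Finset.coe_range, Set.mem_Iio]
    by_contra h
    push_neg at h
    exact hs (by rw [hS1 (m+s) (le_trans h (Nat.le_add_left s m)), map_zero, smul_zero])
  have hcur2 : curlyFn Dop mul m (mul n u v) w
      = ∑ t ∈ range S, ((-1:k)^(m+t) * ((t.factorial:k))⁻¹) • ((Dop ^ t) (mul (m+t) (mul n u v) w)) := by
    refine finsum_eq_sum_of_support_subset _ ?_
    intro t ht
    rw [Function.mem_support] at ht
    rw [Finset.coe_range, Set.mem_Iio]
    by_contra h
    push_neg at h
    exact ht (by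
      rw [hS2 n le_rfl (m+t) (le_trans h (Nat.le_add_left t m)), map_zero, smul_zero])
  rw [hcur1, hcur2, map_sum]
  -- Step B1: expand each term of the left side into a triple sum
  have hB1 : ∀ s ∈ range S, (mul n u) ((((-1:k)^(m+s) * ((s.factorial:k))⁻¹)) • ((Dop ^ s) (mul (m+s) v w)))
      = ∑ j ∈ range S, ∑ i ∈ range (n+1),
          ((((-1:k)^(m+s) * ((s.factorial:k))⁻¹) * ((n.descFactorial j : k) * ((s.choose j : k))) * (((n-j).choose i) : k))
            • ((Dop ^ (s-j)) (mul (m+s+i) (mul (n-j-i) u v) w))) := by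
    intro s hs
    have hin : ∀ j : ℕ, (Dop ^ (s-j)) (mul (n-j) u (mul (m+s) v w))
        = ∑ i ∈ range (n+1), (((n-j).choose i : k)) • ((Dop ^ (s-j)) (mul (m+s+i) (mul (n-j-i) u v) w)) := by
      intro j
      rw [hassocR (n-j) (m+s) u v w, map_sum]
      simp only [map_smul]
      apply Finset.sum_subset (range_subset_range.2 (by omega))
      intro i _ hi
      have h0 : (n-j).choose i = 0 := Nat.choose_eq_zero_of_lt (by simp at hi; omega)
      simp [h0]
    calc (mul n u) ((((-1:k)^(m+s) * ((s.factorial:k))⁻¹)) • ((Dop ^ s) (mul (m+s) v w)))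
        = ((-1:k)^(m+s) * ((s.factorial:k))⁻¹) • ∑ j ∈ range (s+1),
            ((n.descFactorial j : k) * ((s.choose j : k))) • ((Dop ^ (s-j)) (mul (n-j) u (mul (m+s) v w))) := by
          rw [map_smul, curly_iterC2 Dop mul hC2 s n u (mul (m+s) v w)]
      _ = ((-1:k)^(m+s) * ((s.factorial:k))⁻¹) • ∑ j ∈ range S,
            ((n.descFactorial j : k) * ((s.choose j : k))) • ((Dop ^ (s-j)) (mul (n-j) u (mul (m+s) v w))) := by
          congr 1
          apply Finset.sum_subset (range_subset_range.2 (mem_range.1 hs))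
          intro j _ hj
          have h0 : s.choose j = 0 := Nat.choose_eq_zero_of_lt (by simp at hj; omega)
          simp [h0]
      _ = ∑ j ∈ range S, ∑ i ∈ range (n+1),
          ((((-1:k)^(m+s) * ((s.factorial:k))⁻¹) * ((n.descFactorial j : k) * ((s.choose j : k))) * (((n-j).choose i) : k))
            • ((Dop ^ (s-j)) (mul (m+s+i) (mul (n-j-i) u v) w))) := by
          rw [Finset.smul_sum]
          refine Finset.sum_congr rfl fun j _ => ?_
          rw [hin j, Finset.smul_sum, Finset.smul_sum]
          refine Finset.sum_congr rfl fun i _ => ?_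
          rw [smul_smul, smul_smul]
  rw [Finset.sum_congr rfl hB1]
  -- E1 = E2 (swap s and j)
  rw [Finset.sum_comm]
  -- E2 = E3 (shift s = r + j)
  have hB3 : ∀ j ∈ range S,
      (∑ s ∈ range S, ∑ i ∈ range (n+1),
          ((((-1:k)^(m+s) * ((s.factorial:k))⁻¹) * ((n.descFactorial j : k) * ((s.choose j : k))) * (((n-j).choose i) : k))
            • ((Dop ^ (s-j)) (mul (m+s+i) (mul (n-j-i) u v) w))))
      = ∑ r ∈ range S, ∑ i ∈ range (n+1),
          ((((-1:k)^(m+(r+j)) * (((r+j).factorial:k))⁻¹) * ((n.descFactorial j : k) * (((r+j).choose j : k))) * (((n-j).choose i) : k))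
            • ((Dop ^ ((r+j)-j)) (mul (m+(r+j)+i) (mul (n-j-i) u v) w))) := by
    intro j _
    exact curly_shift_sum
      (fun s => ∑ i ∈ range (n+1),
          ((((-1:k)^(m+s) * ((s.factorial:k))⁻¹) * ((n.descFactorial j : k) * ((s.choose j : k))) * (((n-j).choose i) : k))
            • ((Dop ^ (s-j)) (mul (m+s+i) (mul (n-j-i) u v) w)))) S j
      (by
        intro s hsj
        refine Finset.sum_eq_zero fun i _ => ?_
        have h0 : s.choose j = 0 := Nat.choose_eq_zero_of_lt hsj
        simp [h0])
      (by
        intro s hSs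
        refine Finset.sum_eq_zero fun i _ => ?_
        have h0 : mul (m+s+i) (mul (n-j-i) u v) w = 0 :=
          hS2 (n-j-i) (by omega) (m+s+i) (by omega)
        simp [h0])
  rw [Finset.sum_congr rfl hB3]
  -- E3 = E4 (swap j and r)
  rw [Finset.sum_comm]
  -- E4 = E5 (reindex i -> a = j + i)
  have hB5 : ∀ r ∈ range S, ∀ j ∈ range S,
      (∑ i ∈ range (n+1),
          ((((-1:k)^(m+(r+j)) * (((r+j).factorial:k))⁻¹) * ((n.descFactorial j : k) * (((r+j).choose j : k))) * (((n-j).choose i) : k))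
            • ((Dop ^ ((r+j)-j)) (mul (m+(r+j)+i) (mul (n-j-i) u v) w))))
      = ∑ a ∈ range (n+1),
          (if j ≤ a then
            (((-1:k)^(m+(r+j)) * (((r+j).factorial:k))⁻¹) * ((n.descFactorial j : k) * (((r+j).choose j : k))) * (((n-j).choose (a-j)) : k))
          else 0)
            • ((Dop ^ r) (mul (m+r+a) (mul (n-a) u v) w)) := by
    intro r _ j _
    have hshift := curly_shift_sum
      (fun a => (if j ≤ a then
            (((-1:k)^(m+(r+j)) * (((r+j).factorial:k))⁻¹) * ((n.descFactorial j : k) * (((r+j).choose j : k))) * (((n-j).choose (a-j)) : k))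
          else 0)
            • ((Dop ^ r) (mul (m+r+a) (mul (n-a) u v) w))) (n+1) j
      (by
        intro a haj
        have hn : ¬ j ≤ a := by omega
        simp [hn])
      (by
        intro a hna
        rcases le_or_gt j a with hja | hja
        · rcases le_or_gt j n with hjn | hjn
          · have h0 : (n-j).choose (a-j) = 0 := Nat.choose_eq_zero_of_lt (by omega)
            simp [h0]
          · have h0 : n.descFactorial j = 0 := Nat.descFactorial_eq_zero_iff_lt.2 hjn
            simp [h0]
        · have hn : ¬ j ≤ a := by omega
          simp [hn])
    rw [hshift]
    refine Finset.sum_congr rfl fun i _ => ?_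
    beta_reduce
    rw [if_pos (Nat.le_add_left j i), Nat.add_sub_cancel, Nat.add_sub_cancel]
    have e1 : m + r + (i + j) = m + (r + j) + i := by omega
    have e2 : n - (i + j) = n - j - i := by omega
    rw [e1, e2]
  rw [Finset.sum_congr rfl (fun r hr => Finset.sum_congr rfl (hB5 r hr))]
  -- E5 = E6 (swap j and a), then collapse the j-sum via the key scalar identity
  have hB7 : ∀ r ∈ range S,
      (∑ j ∈ range S, ∑ a ∈ range (n+1),
          (if j ≤ a then
            (((-1:k)^(m+(r+j)) * (((r+j).factorial:k))⁻¹) * ((n.descFactorial j : k) * (((r+j).choose j : k))) * (((n-j).choose (a-j)) : k))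
          else 0)
            • ((Dop ^ r) (mul (m+r+a) (mul (n-a) u v) w)))
      = ((-1:k)^(m+r) * ((r.factorial:k))⁻¹) • ((Dop ^ r) (mul (m+r) (mul n u v) w)) := by
    intro r _
    rw [Finset.sum_comm]
    have hinner : ∀ a ∈ range (n+1),
        (∑ j ∈ range S,
          (if j ≤ a then
            (((-1:k)^(m+(r+j)) * (((r+j).factorial:k))⁻¹) * ((n.descFactorial j : k) * (((r+j).choose j : k))) * (((n-j).choose (a-j)) : k))
          else 0)
            • ((Dop ^ r) (mul (m+r+a) (mul (n-a) u v) w)))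
        = (if a = 0 then ((-1:k)^(m+r) * ((r.factorial:k))⁻¹) else 0)
            • ((Dop ^ r) (mul (m+r+a) (mul (n-a) u v) w)) := by
      intro a ha
      have ha' : a ≤ n := Nat.lt_succ_iff.1 (mem_range.1 ha)
      rw [← Finset.sum_smul]
      congr 1
      have hred : (∑ j ∈ range S,
          (if j ≤ a then
            (((-1:k)^(m+(r+j)) * (((r+j).factorial:k))⁻¹) * ((n.descFactorial j : k) * (((r+j).choose j : k))) * (((n-j).choose (a-j)) : k))
          else 0))
          = ∑ j ∈ range (a+1),
            (((-1:k)^(m+(r+j)) * (((r+j).factorial:k))⁻¹) * ((n.descFactorial j : k) * (((r+j).choose j : k))) * (((n-j).choose (a-j)) : k)) := by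
        have hss : a + 1 ≤ S := by omega
        rw [← Finset.sum_subset (range_subset_range.2 hss) (fun j _ hj => by
          have : ¬ j ≤ a := by simp at hj; omega
          rw [if_neg this])]
        refine Finset.sum_congr rfl fun j hj => ?_
        rw [if_pos (Nat.lt_succ_iff.1 (mem_range.1 hj))]
      rw [hred, curly_key_scalar n m r a ha']
    rw [Finset.sum_congr rfl hinner]
    have hfin : ∀ a ∈ range (n+1),
        (if a = 0 then ((-1:k)^(m+r) * ((r.factorial:k))⁻¹) else 0)
            • ((Dop ^ r) (mul (m+r+a) (mul (n-a) u v) w))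
        = (if a = 0 then ((-1:k)^(m+r) * ((r.factorial:k))⁻¹) • ((Dop ^ r) (mul (m+r+a) (mul (n-a) u v) w)) else 0) := by
      intro a _
      split_ifs <;> simp
    rw [Finset.sum_congr rfl hfin]
    have h00 : ∀ a ∈ range (n+1),
        (if a = 0 then ((-1:k)^(m+r) * ((r.factorial:k))⁻¹) • ((Dop ^ r) (mul (m+r+a) (mul (n-a) u v) w)) else 0)
        = (if a = 0 then ((-1:k)^(m+r) * ((r.factorial:k))⁻¹) • ((Dop ^ r) (mul (m+r) (mul n u v) w)) else 0) := by
      intro a _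
      split_ifs with h
      · subst h; norm_num
      · rfl
    rw [Finset.sum_congr rfl h00, Finset.sum_ite_eq' (range (n+1)) 0]
    rw [if_pos (mem_range.2 (Nat.succ_pos n))]
  rw [Finset.sum_congr rfl hB7]
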